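/- Let α ∈ 𝕋 be non-periodic under the doubling map. For any two distinct finite words u₁, u₂ ∈ {L,R}^*, the chord of the pair (ũ₁(⋆₁), ũ₁(⋆₂)) and the chord of the pair (ũ₂(⋆₁), ũ₂(⋆₂)) are disjoint as closed segments in ℂ. -/

import Mathlib

open Set MeasureTheory Filter
open scoped Classical

noncomputable section

/-- The circle `ℝ/ℤ`. -/
abbrev 𝕋 := AddCircle (1 : ℝ)

/-- The doubling map `h(x) = 2x` on the circle. -/
def dbl (x : 𝕋) : 𝕋 := x + x

/-- The representative of a point of the circle lying in `[0,1)`. -/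
def rep (x : 𝕋) : ℝ := (AddCircle.equivIco 1 0 x : ℝ)

/-- `⋆₁ = α/2`. -/
def star1 (α : 𝕋) : 𝕋 := ((rep α / 2 : ℝ) : 𝕋)

/-- `⋆₂ = α/2 + 1/2`. -/
def star2 (α : 𝕋) : 𝕋 := ((rep α / 2 + 1 / 2 : ℝ) : 𝕋)

/-- The closed semicircle `C(L) = {α/2 + t : t ∈ [0,1/2]}`. -/
def arcL (α : 𝕋) : Set 𝕋 := (fun t : ℝ => ((rep α / 2 + t : ℝ) : 𝕋)) '' Set.Icc 0 (1 / 2)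

/-- The closed semicircle `C(R) = {α/2 + 1/2 + t : t ∈ [0,1/2]}`. -/
def arcR (α : 𝕋) : Set 𝕋 :=
  (fun t : ℝ => ((rep α / 2 + 1 / 2 + t : ℝ) : 𝕋)) '' Set.Icc 0 (1 / 2)

/-- The open semicircle `{α/2 + t : t ∈ (0,1/2)}`. -/
def openArcL (α : 𝕋) : Set 𝕋 := (fun t : ℝ => ((rep α / 2 + t : ℝ) : 𝕋)) '' Set.Ioo 0 (1 / 2)

/-- The open semicircle `{α/2 + 1/2 + t : t ∈ (0,1/2)}`. -/
def openArcR (α : 𝕋) : Set 𝕋 :=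
  (fun t : ℝ => ((rep α / 2 + 1 / 2 + t : ℝ) : 𝕋)) '' Set.Ioo 0 (1 / 2)

/-- The alphabet `{L, R, ⋆}`. -/
inductive Letter | L | R | star
deriving DecidableEq

/-- `itin α x n` is the `(n+1)`-st letter of the itinerary `I^α(x)`. -/
def itin (α x : 𝕋) (n : ℕ) : Letter :=
  if dbl^[n] x = star1 α ∨ dbl^[n] x = star2 α then Letter.star
  else if dbl^[n] x ∈ openArcL α then Letter.L else Letter.R

/-- The lamination `x ≈_α y`. -/
def approx (α : 𝕋) (x y : 𝕋) : Prop :=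
  ∀ n : ℕ, itin α x n = itin α y n ∨ itin α x n = Letter.star ∨ itin α y n = Letter.star

/-- A point is periodic under the doubling map. -/
def IsPeriodicPt' (x : 𝕋) : Prop := ∃ k : ℕ, 1 ≤ k ∧ dbl^[k] x = x

/-- `α` is periodic under the doubling map. -/
def Periodic' (α : 𝕋) : Prop := IsPeriodicPt' α

/-- `α` is pre-periodic under the doubling map. -/
def PrePeriodic (α : 𝕋) : Prop := ∃ m : ℕ, IsPeriodicPt' (dbl^[m] α)

/-- `D` is a gluing link with `n` arcs with respect to `≈_α`: a disjoint union of `n` closed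
arcs whose `2n` endpoints occur in counterclockwise cyclic order and are consecutively glued
by `≈_α`. -/
def IsGluingLink (α : 𝕋) (n : ℕ) (D : Set 𝕋) : Prop :=
  0 < n ∧ ∃ s e : ℕ → ℝ,
    (∀ i < n, s i ≤ e i) ∧
    (∀ i j : ℕ, i < j → j < n → e i < s j) ∧
    (∀ i < n, ∀ j < n, e j < s i + 1) ∧
    D = ⋃ i ∈ Finset.range n, (fun t : ℝ => (t : 𝕋)) '' Set.Icc (s i) (e i) ∧
    (∀ i < n, approx α ((e i : ℝ) : 𝕋) ((s ((i + 1) % n) : ℝ) : 𝕋))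

/-- `L̃(x)`: the `h`-preimage of `x` in the interior of `C(L)` (for `x ≠ α`). -/
def tldL (α x : 𝕋) : 𝕋 :=
  if ((rep x / 2 : ℝ) : 𝕋) ∈ openArcL α then ((rep x / 2 : ℝ) : 𝕋)
  else ((rep x / 2 + 1 / 2 : ℝ) : 𝕋)

/-- `R̃(x)`: the `h`-preimage of `x` in the interior of `C(R)` (for `x ≠ α`). -/
def tldR (α x : 𝕋) : 𝕋 :=
  if ((rep x / 2 : ℝ) : 𝕋) ∈ openArcR α then ((rep x / 2 : ℝ) : 𝕋)
  else ((rep x / 2 + 1 / 2 : ℝ) : 𝕋)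

/-- The inverse branch associated with a single letter of `{L,R}`
(`true` codes `L`, `false` codes `R`). -/
def tldB (α : 𝕋) (b : Bool) (x : 𝕋) : 𝕋 := if b then tldL α x else tldR α x

/-- `g̃ = g̃[1] ∘ ⋯ ∘ g̃[n]` for a word `g ∈ {L,R}^*`. -/
def wtld (α : 𝕋) (g : List Bool) (x : 𝕋) : 𝕋 := g.foldr (fun b y => tldB α b y) x

/-- The embedding `e(θ) = exp(2πiθ)` of the circle into `ℂ`. -/
def emb (x : 𝕋) : ℂ := Complex.exp (2 * Real.pi * Complex.I * (rep x))

/-- The chord of a pair of points of the circle: the closed Euclidean segment joining their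
images in `ℂ`. -/
def chord (a b : 𝕋) : Set ℂ := segment ℝ (emb a) (emb b)

/-- The union of all chords `l_g` for words `g ∈ {L,R}^n`. -/
def chordsUnion (α : 𝕋) (n : ℕ) : Set ℂ :=
  ⋃ g ∈ {g : List Bool | g.length = n},
    chord (wtld α g (star1 α)) (wtld α g (star2 α))

/-- The closed unit disk minus the chords of level `n`. -/
def diskMinus (α : 𝕋) (n : ℕ) : Set ℂ := Metric.closedBall (0 : ℂ) 1 \ chordsUnion α n

/-- `C` is a generalized cylinder set of degree `n`: the trace on the circle of the closure of
a connected component of the closed unit disk minus the chords of level `n`. -/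
def IsGCS (α : 𝕋) (n : ℕ) (C : Set 𝕋) : Prop :=
  ∃ z ∈ diskMinus α n,
    C = {x : 𝕋 | emb x ∈ closure (connectedComponentIn (diskMinus α n) z)}

/-- The closed region of the circle associated with a letter (`⋆` imposes no restriction). -/
def semi (α : 𝕋) : Letter → Set 𝕋
  | Letter.L => arcL α
  | Letter.R => arcR α
  | Letter.star => Set.univ

/-- `C(u)` for a word `u ∈ {L,R,⋆}^m`. -/
def cylSet (α : 𝕋) (u : List Letter) : Set 𝕋 :=
  {x : 𝕋 | ∀ i < u.length, dbl^[i] x ∈ semi α (u.getD i Letter.star)}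

/-- The digit sequence of `I(α) = I^α(α)` (0-indexed: `ia α n` is the `(n+1)`-st digit). -/
def ia (α : 𝕋) (n : ℕ) : Letter := itin α α n

/-- A set `ℛ ⊆ ℕ` of indices is `D`-rare. -/
def DRare (D : ℕ) (R : Finset ℕ) : Prop :=
  ∀ i : ℕ, (R.filter (fun j => i ≤ j ∧ j ≤ i + D)).card ≤ 3

/-- The `i`-th digit (1-based) of `I(α)[1..n]` is `(D,ℛ)`-duplicating. -/
def DupDigit (α : 𝕋) (D : ℕ) (R : Finset ℕ) (n i : ℕ) : Prop :=
  ∃ a b : ℕ, 1 ≤ a ∧ a ≤ i ∧ i ≤ b ∧ b ≤ n ∧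
    (∀ j, a ≤ j → j ≤ b → j ∉ R → ia α (j - 1) = ia α (j - a)) ∧
    (b = n ∨ D < b - a + 1)


/-- `α` is strongly recurrent. -/
def StronglyRecurrent (α : 𝕋) : Prop :=
  ∀ D : ℕ, 0 < D → ∀ τ : ℝ, τ < 1 →
    ∃ n : ℕ, D < n ∧ ∃ R : Finset ℕ, R ⊆ Finset.Icc 1 n ∧ DRare D R ∧
      τ * n < ((Finset.Icc 1 n).filter (fun i => DupDigit α D R n i)).card

/-- `α` is weakly pre-periodic with period `k`. -/
def WeaklyPrePeriodicWith (α : 𝕋) (k : ℕ) : Prop :=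
  1 ≤ k ∧ ∃ m : ℕ, 1 ≤ m ∧ ∃ X : Letter, (X = Letter.L ∨ X = Letter.R) ∧
    ∀ n : ℕ, ia α (m + k * n - 1) = X

/-- `α` is weakly pre-periodic (for some period). -/
def WeaklyPrePeriodic (α : 𝕋) : Prop := ∃ k : ℕ, WeaklyPrePeriodicWith α k

end

/-! ### Auxiliary development for `stmt_8` -/

noncomputable section StmtEightAux

open Set

/-- fract evaluation on `[0,1)`. -/
lemma ffe {x : ℝ} (h0 : 0 ≤ x) (h1 : x < 1) : Int.fract x = x := Int.fract_eq_self.mpr ⟨h0, h1⟩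

/-- fract evaluation on `[-1,0)`. -/
lemma ffn {x : ℝ} (h0 : -1 ≤ x) (h1 : x < 0) : Int.fract x = x + 1 := by
  have h : Int.fract (x + 1) = x + 1 := Int.fract_eq_self.mpr ⟨by linarith, by linarith⟩
  rw [← h, show x + 1 = x + ((1:ℤ):ℝ) by push_cast; ring, Int.fract_add_intCast]

lemma fract_congr' {u v : ℝ} (n : ℤ) (h : u = v + n) : Int.fract u = Int.fract v := by
  rw [h, Int.fract_add_intCast]

/-- Cyclic order predicate: going counterclockwise from `x`, one meets `y` strictly
before `z` (all taken mod 1); in particular `y` differs from `x` and `z` mod 1. -/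
def Cord (x y z : ℝ) : Prop :=
  0 < Int.fract (y - x) ∧ Int.fract (y - x) < Int.fract (z - x)

/-- The pair `{x,y}` lies strictly inside one of the two open arcs bounded by `{a,b}`. -/
def Unl (a b x y : ℝ) : Prop := (Cord a x b ∧ Cord a y b) ∨ (Cord b x a ∧ Cord b y a)

lemma Unl_swap {a b x y : ℝ} (h : Unl a b x y) : Unl b a x y := h.symm

lemma Cord_shift {r x y z : ℝ} (h : Cord x y z) : Cord (r + x) (r + y) (r + z) := by
  unfold Cord at h ⊢
  rw [show r + y - (r + x) = y - x by ring, show r + z - (r + x) = z - x by ring]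
  exact h

lemma Unl_shift {r a b x y : ℝ} (h : Unl a b x y) : Unl (r + a) (r + b) (r + x) (r + y) := by
  rcases h with ⟨h1, h2⟩ | ⟨h1, h2⟩
  · exact Or.inl ⟨Cord_shift h1, Cord_shift h2⟩
  · exact Or.inr ⟨Cord_shift h1, Cord_shift h2⟩

lemma Cord_fract {x y z : ℝ} (h : Cord x y z) :
    Cord (Int.fract x) (Int.fract y) (Int.fract z) := by
  unfold Cord at h ⊢
  have e1 : Int.fract (Int.fract y - Int.fract x) = Int.fract (y - x) :=
    fract_congr' (⌊x⌋ - ⌊y⌋) (by simp only [Int.fract]; push_cast; ring)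
  have e2 : Int.fract (Int.fract z - Int.fract x) = Int.fract (z - x) :=
    fract_congr' (⌊x⌋ - ⌊z⌋) (by simp only [Int.fract]; push_cast; ring)
  rw [e1, e2]
  exact h

/-- Introduction rule for `Cord` when all three points lie in the window `[0,1)`. -/
lemma Cof {x y z : ℝ} (hx : 0 ≤ x) (hx1 : x < 1) (hy : 0 ≤ y) (hy1 : y < 1)
    (hz : 0 ≤ z) (hz1 : z < 1)
    (h : (x < y ∧ y < z) ∨ (y < z ∧ z < x) ∨ (z < x ∧ x < y)) : Cord x y z := by
  unfold Cord
  rcases h with ⟨h1, h2⟩ | ⟨h1, h2⟩ | ⟨h1, h2⟩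
  · rw [ffe (by linarith) (by linarith), ffe (by linarith) (by linarith)]
    exact ⟨by linarith, by linarith⟩
  · rw [ffn (by linarith) (by linarith), ffn (by linarith) (by linarith)]
    exact ⟨by linarith, by linarith⟩
  · rw [ffe (by linarith) (by linarith), ffn (by linarith) (by linarith)]
    exact ⟨by linarith, by linarith⟩

/-- Halving preserves the cyclic order of points in the window `[0,1)`. -/
lemma Cord_half {x y z : ℝ} (hx : 0 ≤ x) (hx1 : x < 1) (hy : 0 ≤ y) (hy1 : y < 1)
    (hz : 0 ≤ z) (hz1 : z < 1) (h : Cord x y z) : Cord (x/2) (y/2) (z/2) := by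
  obtain ⟨h1, h2⟩ := h
  unfold Cord
  rcases lt_trichotomy x y with hxy | hxy | hxy
  · rcases lt_trichotomy x z with hxz | hxz | hxz
    · rw [ffe (by linarith : (0:ℝ) ≤ y - x) (by linarith),
        ffe (by linarith : (0:ℝ) ≤ z - x) (by linarith)] at h2
      rw [ffe (by linarith : (0:ℝ) ≤ y/2 - x/2) (by linarith),
        ffe (by linarith : (0:ℝ) ≤ z/2 - x/2) (by linarith)]
      exact ⟨by linarith, by linarith⟩
    · exfalso
      rw [← hxz, sub_self, Int.fract_zero] at h2
      have := Int.fract_nonneg (y - x); linarith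
    · rw [ffe (by linarith : (0:ℝ) ≤ y/2 - x/2) (by linarith),
        ffn (by linarith : (-1:ℝ) ≤ z/2 - x/2) (by linarith)]
      exact ⟨by linarith, by linarith⟩
  · exfalso; rw [← hxy, sub_self, Int.fract_zero] at h1; exact lt_irrefl 0 h1
  · rcases lt_trichotomy x z with hxz | hxz | hxz
    · exfalso
      rw [ffn (by linarith : (-1:ℝ) ≤ y - x) (by linarith),
        ffe (by linarith : (0:ℝ) ≤ z - x) (by linarith)] at h2
      linarith
    · exfalso
      rw [← hxz, sub_self, Int.fract_zero] at h2
      have := Int.fract_nonneg (y - x); linarith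
    · rw [ffn (by linarith : (-1:ℝ) ≤ y - x) (by linarith),
        ffn (by linarith : (-1:ℝ) ≤ z - x) (by linarith)] at h2
      rw [ffn (by linarith : (-1:ℝ) ≤ y/2 - x/2) (by linarith),
        ffn (by linarith : (-1:ℝ) ≤ z/2 - x/2) (by linarith)]
      exact ⟨by linarith, by linarith⟩

/-- The maps `t ↦ fract (ρ + t/2)` preserve cyclic order of points of `[0,1)`. -/
lemma Cord_phi (ρ : ℝ) {x y z : ℝ} (hx : 0 ≤ x) (hx1 : x < 1) (hy : 0 ≤ y) (hy1 : y < 1)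
    (hz : 0 ≤ z) (hz1 : z < 1) (h : Cord x y z) :
    Cord (Int.fract (ρ + x/2)) (Int.fract (ρ + y/2)) (Int.fract (ρ + z/2)) :=
  Cord_fract (Cord_shift (Cord_half hx hx1 hy hy1 hz hz1 h))

/-! ### Geometry: chords of the unit circle -/

/-- `Epoint θ = exp(2πiθ)`. -/
def Epoint (θ : ℝ) : ℂ := Complex.exp ((2 * Real.pi * θ : ℝ) * Complex.I)

lemma Epoint_re (θ : ℝ) : (Epoint θ).re = Real.cos (2 * Real.pi * θ) :=
  Complex.exp_ofReal_mul_I_re _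

lemma Epoint_add (θ η : ℝ) : Epoint (θ + η) = Epoint θ * Epoint η := by
  rw [Epoint, Epoint, Epoint, ← Complex.exp_add]; congr 1; push_cast; ring

lemma Epoint_int (n : ℤ) : Epoint n = 1 := by
  rw [Epoint, show ((2 * Real.pi * (n:ℝ) : ℝ) : ℂ) * Complex.I
    = n * (2 * (Real.pi:ℂ) * Complex.I) by push_cast; ring]
  exact Complex.exp_int_mul_two_pi_mul_I n

lemma Epoint_eq {θ η : ℝ} (n : ℤ) (h : θ = η + n) : Epoint θ = Epoint η := by
  rw [h, Epoint_add, Epoint_int, mul_one]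

lemma re_seg_eq {p q w : ℂ} {κ : ℝ} (hp : (p * w).re = κ) (hq : (q * w).re = κ)
    {z : ℂ} (hz : z ∈ segment ℝ p q) : (z * w).re = κ := by
  obtain ⟨s, t, hs, ht, hst, rfl⟩ := hz
  rw [add_mul, smul_mul_assoc, smul_mul_assoc, Complex.add_re, Complex.real_smul,
    Complex.real_smul, Complex.re_ofReal_mul, Complex.re_ofReal_mul, hp, hq]
  linear_combination κ * hst

lemma re_seg_gt {p q w : ℂ} {κ : ℝ} (hp : κ < (p * w).re) (hq : κ < (q * w).re)
    {z : ℂ} (hz : z ∈ segment ℝ p q) : κ < (z * w).re := by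
  obtain ⟨s, t, hs, ht, hst, rfl⟩ := hz
  rw [add_mul, smul_mul_assoc, smul_mul_assoc, Complex.add_re, Complex.real_smul,
    Complex.real_smul, Complex.re_ofReal_mul, Complex.re_ofReal_mul]
  have hκ : s * κ + t * κ = κ := by linear_combination κ * hst
  rcases eq_or_lt_of_le hs with hs0 | hs0
  · rw [← hs0]; simp only [zero_mul, zero_add]
    have ht1 : t = 1 := by linarith
    rw [ht1, one_mul]; exact hq
  · have k1 : t * κ ≤ t * (q * w).re := mul_le_mul_of_nonneg_left hq.le ht
    have k2 : s * κ < s * (p * w).re := mul_lt_mul_of_pos_left hp hs0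
    linarith

/-- Core separation: the chord spanning `[u, u+δ]` on the circle is disjoint from any chord
with both endpoints strictly inside the arc `(u, u+δ)`, provided `δ < 1`. -/
lemma core_disj {u δ dx dy : ℝ} (h1 : 0 < dx) (h2 : dx < δ) (h3 : 0 < dy) (h4 : dy < δ)
    (h5 : δ < 1) :
    Disjoint (segment ℝ (Epoint u) (Epoint (u + δ)))
      (segment ℝ (Epoint (u + dx)) (Epoint (u + dy))) := by
  have hπ := Real.pi_pos
  set w : ℂ := Epoint (-(u + δ/2)) with hw
  set κ : ℝ := Real.cos (2 * Real.pi * (δ/2)) with hκ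
  have hre : ∀ θ : ℝ, (Epoint θ * w).re = Real.cos (2 * Real.pi * (θ - (u + δ/2))) := by
    intro θ
    rw [hw, ← Epoint_add, show θ + -(u + δ/2) = θ - (u + δ/2) by ring, Epoint_re]
  have hu : (Epoint u * w).re = κ := by
    rw [hre, show 2 * Real.pi * (u - (u + δ/2)) = -(2 * Real.pi * (δ/2)) by ring,
      Real.cos_neg]
  have hv : (Epoint (u + δ) * w).re = κ := by
    rw [hre]; congr 1; ring
  have hgt : ∀ d : ℝ, 0 < d → d < δ → κ < (Epoint (u + d) * w).re := by
    intro d hd1 hd2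
    rw [hre, show u + d - (u + δ/2) = d - δ/2 by ring]
    have habs : |2 * Real.pi * (d - δ/2)| < 2 * Real.pi * (δ/2) := by
      rw [abs_mul, abs_of_pos (by positivity : (0:ℝ) < 2 * Real.pi)]
      have h6 : |d - δ/2| < δ/2 := abs_lt.mpr ⟨by linarith, by linarith⟩
      nlinarith
    calc κ < Real.cos |2 * Real.pi * (d - δ/2)| :=
          Real.cos_lt_cos_of_nonneg_of_le_pi (abs_nonneg _) (by nlinarith) habs
      _ = Real.cos (2 * Real.pi * (d - δ/2)) := Real.cos_abs _
  rw [Set.disjoint_left]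
  intro z hz1 hz2
  have e1 := re_seg_eq hu hv hz1
  have e2 := re_seg_gt (hgt dx h1 h2) (hgt dy h3 h4) hz2
  linarith

lemma geom1 {a b x y : ℝ} (h1 : Cord a x b) (h2 : Cord a y b) :
    Disjoint (segment ℝ (Epoint a) (Epoint b)) (segment ℝ (Epoint x) (Epoint y)) := by
  obtain ⟨hx0, hxδ⟩ := h1
  obtain ⟨hy0, hyδ⟩ := h2
  have hb : Epoint b = Epoint (a + Int.fract (b - a)) :=
    Epoint_eq ⌊b - a⌋ (by simp only [Int.fract]; push_cast; ring)
  have hx : Epoint x = Epoint (a + Int.fract (x - a)) :=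
    Epoint_eq ⌊x - a⌋ (by simp only [Int.fract]; push_cast; ring)
  have hy : Epoint y = Epoint (a + Int.fract (y - a)) :=
    Epoint_eq ⌊y - a⌋ (by simp only [Int.fract]; push_cast; ring)
  rw [hb, hx, hy]
  exact core_disj hx0 hxδ hy0 hyδ (Int.fract_lt_one _)

/-- Strictly unlinked pairs of circle points span disjoint chords. -/
lemma geom {a b x y : ℝ} (h : Unl a b x y) :
    Disjoint (segment ℝ (Epoint a) (Epoint b)) (segment ℝ (Epoint x) (Epoint y)) := by
  rcases h with ⟨h1, h2⟩ | ⟨h1, h2⟩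
  · exact geom1 h1 h2
  · rw [segment_symm]; exact geom1 h1 h2

end StmtEightAux

noncomputable section StmtEightAux2

open Set

lemma coe_rep (x : 𝕋) : ((rep x : ℝ) : 𝕋) = x := (AddCircle.equivIco 1 0).symm_apply_apply x

lemma rep_mem (x : 𝕋) : rep x ∈ Set.Ico (0:ℝ) 1 := by
  have h := (AddCircle.equivIco 1 0 x).2
  simpa [rep] using h

lemma coe_eq_zero {u : ℝ} : ((u:ℝ):𝕋) = 0 ↔ ∃ n:ℤ, u = n := by
  rw [AddCircle.coe_eq_zero_iff]
  constructor
  · rintro ⟨n, hn⟩; exact ⟨n, by simpa [zsmul_eq_mul] using hn.symm⟩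
  · rintro ⟨n, hn⟩; exact ⟨n, by simp [zsmul_eq_mul, hn]⟩

lemma coe_eq_coe {u v : ℝ} : ((u:ℝ):𝕋) = ((v:ℝ):𝕋) ↔ ∃ n:ℤ, u - v = n := by
  constructor
  · intro h
    refine coe_eq_zero.mp ?_
    have h2 : ((u - v:ℝ):𝕋) = ((u:ℝ):𝕋) - ((v:ℝ):𝕋) := rfl
    rw [h2, h, sub_self]
  · rintro ⟨n, hn⟩
    have h2 : ((u - v:ℝ):𝕋) = 0 := coe_eq_zero.mpr ⟨n, hn⟩
    have h3 : ((u - v:ℝ):𝕋) = ((u:ℝ):𝕋) - ((v:ℝ):𝕋) := rfl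
    rw [h3] at h2
    exact sub_eq_zero.mp h2

lemma rep_coe (r : ℝ) : rep ((r:ℝ):𝕋) = Int.fract r := by
  simp [rep, AddCircle.coe_equivIco_mk_apply]

lemma emb_coe (r : ℝ) : emb ((r:ℝ):𝕋) = Epoint r := by
  have e1 : emb ((r:ℝ):𝕋) = Epoint (Int.fract r) := by
    rw [emb, rep_coe, Epoint]; congr 1; push_cast; ring
  rw [e1]
  exact Epoint_eq (-⌊r⌋) (by simp only [Int.fract]; push_cast; ring)

lemma half_or (z : 𝕋) (h : z + z = 0) : z = ((0:ℝ):𝕋) ∨ z = ((1/2:ℝ):𝕋) := by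
  have hz : ((rep z:ℝ):𝕋) = z := coe_rep z
  have hr := rep_mem z
  have h2 : ((rep z + rep z:ℝ):𝕋) = 0 := by
    have e : ((rep z + rep z:ℝ):𝕋) = ((rep z:ℝ):𝕋) + ((rep z:ℝ):𝕋) := rfl
    rw [e, hz, h]
  obtain ⟨n, hn⟩ := coe_eq_zero.mp h2
  have b0 : (0:ℤ) ≤ n := by exact_mod_cast (by rw [← hn]; linarith [hr.1] : (0:ℝ) ≤ n)
  have b1 : (n:ℤ) < 2 := by exact_mod_cast (by rw [← hn]; linarith [hr.2] : (n:ℝ) < 2)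
  interval_cases n
  · left; rw [← hz]; congr 1; simp at hn; linarith
  · right; rw [← hz]; congr 1; simp at hn; linarith

lemma dbl_half (x : 𝕋) : dbl ((rep x/2:ℝ):𝕋) = x := by
  have e : dbl ((rep x/2:ℝ):𝕋) = ((rep x/2 + rep x/2:ℝ):𝕋) := rfl
  rw [e, show rep x/2 + rep x/2 = rep x by ring, coe_rep]

lemma dbl_half' (x : 𝕋) : dbl ((rep x/2 + 1/2:ℝ):𝕋) = x := by
  have e : dbl ((rep x/2 + 1/2:ℝ):𝕋) = ((rep x/2 + 1/2 + (rep x/2 + 1/2):ℝ):𝕋) := rfl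
  rw [e, show ((rep x/2 + 1/2 + (rep x/2 + 1/2):ℝ):𝕋) = ((rep x:ℝ):𝕋) from
    coe_eq_coe.mpr ⟨1, by push_cast; ring⟩, coe_rep]

lemma dbl_star1 (α : 𝕋) : dbl (star1 α) = α := dbl_half α

lemma dbl_star2 (α : 𝕋) : dbl (star2 α) = α := dbl_half' α

lemma dbl_tldB (α : 𝕋) (b : Bool) (x : 𝕋) : dbl (tldB α b x) = x := by
  cases b
  · rw [show tldB α false x = tldR α x from rfl, tldR]
    split_ifs
    · exact dbl_half x
    · exact dbl_half' x
  · rw [show tldB α true x = tldL α x from rfl, tldL]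
    split_ifs
    · exact dbl_half x
    · exact dbl_half' x

lemma dbl_iter (α : 𝕋) (g : List Bool) (x : 𝕋) : dbl^[g.length] (wtld α g x) = x := by
  induction g with
  | nil => rfl
  | cons b g IH =>
    rw [List.length_cons, show wtld α (b::g) x = tldB α b (wtld α g x) from rfl,
      Function.iterate_succ_apply, dbl_tldB, IH]

lemma wtld_ne {α : 𝕋} (hα : ¬ Periodic' α) (g : List Bool) {x : 𝕋} (hx : dbl x = α) :
    wtld α g x ≠ α := by
  intro hEq
  apply hα
  refine ⟨g.length + 1, Nat.le_add_left 1 _, ?_⟩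
  calc dbl^[g.length+1] α = dbl^[g.length+1] (wtld α g x) := by rw [hEq]
    _ = dbl (dbl^[g.length] (wtld α g x)) := Function.iterate_succ_apply' _ _ _
    _ = dbl x := by rw [dbl_iter]
    _ = α := hx

lemma mem_arcL {α : 𝕋} {τ : ℝ} (h : τ ∈ Set.Ioo (0:ℝ) (1/2)) :
    ((rep α/2 + τ:ℝ):𝕋) ∈ openArcL α := ⟨τ, h, rfl⟩

lemma mem_arcR {α : 𝕋} {τ : ℝ} (h : τ ∈ Set.Ioo (0:ℝ) (1/2)) :
    ((rep α/2 + 1/2 + τ:ℝ):𝕋) ∈ openArcR α := ⟨τ, h, rfl⟩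

lemma arc_disj {α : 𝕋} {z : 𝕋} (hL : z ∈ openArcL α) (hR : z ∈ openArcR α) : False := by
  obtain ⟨τ₁, h1, e1⟩ := hL
  obtain ⟨τ₂, h2, e2⟩ := hR
  change ((rep α/2 + τ₁:ℝ):𝕋) = z at e1
  change ((rep α/2 + 1/2 + τ₂:ℝ):𝕋) = z at e2
  obtain ⟨n, hn⟩ := coe_eq_coe.mp (e1.trans e2.symm)
  have b1 : (-1:ℤ) < n := by
    exact_mod_cast (by rw [← hn]; simp only [mem_Ioo] at h1 h2; linarith [h1.1, h1.2, h2.1, h2.2] : (-1:ℝ) < n)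
  have b2 : (n:ℤ) < 0 := by
    exact_mod_cast (by rw [← hn]; simp only [mem_Ioo] at h1 h2; linarith [h1.1, h1.2, h2.1, h2.2] : (n:ℝ) < 0)
  omega

/-- The translation constants of the inverse branches in angular coordinates based at `α`. -/
def rhoB (α : 𝕋) (b : Bool) : ℝ := (if b then 0 else 1/2) - rep α / 2

/-- The inverse branches in angular coordinates based at `α`. -/
def phiB (α : 𝕋) (b : Bool) (t : ℝ) : ℝ := Int.fract (rhoB α b + t / 2)

/-- The angular coordinate (based at `α`) of `g̃(α + s)`. -/
def Sv (α : 𝕋) (g : List Bool) (s : ℝ) : ℝ := g.foldr (fun b t => phiB α b t) s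

/-- Angular coordinate of `⋆₁` based at `α`. -/
def sA (α : 𝕋) : ℝ := 1 - rep α / 2

/-- Angular coordinate of `⋆₂` based at `α`. -/
def sB (α : 𝕋) : ℝ := 1/2 - rep α / 2

lemma Sv_nil (α : 𝕋) (s : ℝ) : Sv α [] s = s := rfl

lemma Sv_cons (α : 𝕋) (b : Bool) (g : List Bool) (s : ℝ) :
    Sv α (b::g) s = phiB α b (Sv α g s) := rfl

lemma tld_step {α : 𝕋} (b : Bool) {t : ℝ} (ht : t ∈ Set.Ioo (0:ℝ) 1) :
    tldB α b ((rep α + t:ℝ):𝕋) = ((rep α + phiB α b t:ℝ):𝕋) := by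
  obtain ⟨ht0, ht1⟩ := ht
  set a := rep α with ha
  set x : 𝕋 := ((a + t:ℝ):𝕋) with hx
  cases b
  · -- R branch
    have hphi : phiB α false t = Int.fract (1/2 - a/2 + t/2) := by
      rw [phiB, show rhoB α false + t/2 = 1/2 - a/2 + t/2 by simp only [rhoB, ha]; norm_num]
    have hw : ((a/2 + 1/2 + t/2:ℝ):𝕋) = ((a + phiB α false t:ℝ):𝕋) := by
      rw [hphi]
      exact coe_eq_coe.mpr ⟨⌊1/2 - a/2 + t/2⌋, by simp only [Int.fract]; push_cast; ring⟩
    have hdw : dbl ((a/2 + 1/2 + t/2:ℝ):𝕋) = x := by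
      have e : dbl ((a/2 + 1/2 + t/2:ℝ):𝕋) = ((a/2+1/2+t/2 + (a/2+1/2+t/2):ℝ):𝕋) := rfl
      rw [e, hx]
      exact coe_eq_coe.mpr ⟨1, by push_cast; ring⟩
    have tor : ((rep x/2:ℝ):𝕋) = ((a/2+1/2+t/2:ℝ):𝕋) ∨
        ((rep x/2:ℝ):𝕋) = ((a/2+1/2+t/2:ℝ):𝕋) + ((1/2:ℝ):𝕋) := by
      have hzz : (((rep x/2:ℝ):𝕋) - ((a/2+1/2+t/2:ℝ):𝕋)) + (((rep x/2:ℝ):𝕋) - ((a/2+1/2+t/2:ℝ):𝕋)) = 0 := by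
        have hd : (((rep x/2:ℝ):𝕋) - ((a/2+1/2+t/2:ℝ):𝕋)) + (((rep x/2:ℝ):𝕋) - ((a/2+1/2+t/2:ℝ):𝕋))
            = dbl ((rep x/2:ℝ):𝕋) - dbl ((a/2+1/2+t/2:ℝ):𝕋) := by unfold dbl; abel
        rw [hd, dbl_half, hdw, sub_self]
      rcases half_or _ hzz with h0 | h0
      · left
        have h0' : ((rep x/2:ℝ):𝕋) - ((a/2+1/2+t/2:ℝ):𝕋) = 0 := by rw [h0]; rfl
        exact sub_eq_zero.mp h0'
      · right
        rw [← h0]; abel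
    have hmem : ((a/2 + 1/2 + t/2:ℝ):𝕋) ∈ openArcR α :=
      mem_arcR ⟨by linarith, by linarith⟩
    rw [show tldB α false x = tldR α x from rfl, tldR]
    rcases tor with h0 | h0
    · rw [show rep x/2 = rep x/2 from rfl] at h0
      rw [if_pos (by rw [h0]; exact hmem)]
      rw [h0, hw]
    · have hinL : ((rep x/2:ℝ):𝕋) ∈ openArcL α := by
        rw [h0, show ((a/2+1/2+t/2:ℝ):𝕋) + ((1/2:ℝ):𝕋) = ((a/2+1/2+t/2+1/2:ℝ):𝕋) from rfl,
          show ((a/2+1/2+t/2+1/2:ℝ):𝕋) = ((a/2+t/2:ℝ):𝕋) from coe_eq_coe.mpr ⟨1, by ring⟩]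
        exact mem_arcL ⟨by linarith, by linarith⟩
      rw [if_neg (fun hmem' => arc_disj hinL hmem')]
      have e2 : ((rep x/2 + 1/2:ℝ):𝕋) = ((rep x/2:ℝ):𝕋) + ((1/2:ℝ):𝕋) := rfl
      rw [e2, h0, add_assoc,
        show ((1/2:ℝ):𝕋) + ((1/2:ℝ):𝕋) = 0 from by
          rw [show ((1/2:ℝ):𝕋) + ((1/2:ℝ):𝕋) = ((1/2+1/2:ℝ):𝕋) from rfl]
          exact coe_eq_zero.mpr ⟨1, by norm_num⟩,
        add_zero, hw]
  · -- L branch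
    have hphi : phiB α true t = Int.fract (t/2 - a/2) := by
      rw [phiB, show rhoB α true + t/2 = t/2 - a/2 by simp only [rhoB, ha]; norm_num; ring]
    have hw : ((a/2 + t/2:ℝ):𝕋) = ((a + phiB α true t:ℝ):𝕋) := by
      rw [hphi]
      exact coe_eq_coe.mpr ⟨⌊t/2 - a/2⌋, by simp only [Int.fract]; push_cast; ring⟩
    have hdw : dbl ((a/2 + t/2:ℝ):𝕋) = x := by
      have e : dbl ((a/2 + t/2:ℝ):𝕋) = ((a/2+t/2 + (a/2+t/2):ℝ):𝕋) := rfl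
      rw [e, hx]
      exact coe_eq_coe.mpr ⟨0, by push_cast; ring⟩
    have tor : ((rep x/2:ℝ):𝕋) = ((a/2+t/2:ℝ):𝕋) ∨
        ((rep x/2:ℝ):𝕋) = ((a/2+t/2:ℝ):𝕋) + ((1/2:ℝ):𝕋) := by
      have hzz : (((rep x/2:ℝ):𝕋) - ((a/2+t/2:ℝ):𝕋)) + (((rep x/2:ℝ):𝕋) - ((a/2+t/2:ℝ):𝕋)) = 0 := by
        have hd : (((rep x/2:ℝ):𝕋) - ((a/2+t/2:ℝ):𝕋)) + (((rep x/2:ℝ):𝕋) - ((a/2+t/2:ℝ):𝕋))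
            = dbl ((rep x/2:ℝ):𝕋) - dbl ((a/2+t/2:ℝ):𝕋) := by unfold dbl; abel
        rw [hd, dbl_half, hdw, sub_self]
      rcases half_or _ hzz with h0 | h0
      · left
        have h0' : ((rep x/2:ℝ):𝕋) - ((a/2+t/2:ℝ):𝕋) = 0 := by rw [h0]; rfl
        exact sub_eq_zero.mp h0'
      · right
        rw [← h0]; abel
    have hmem : ((a/2 + t/2:ℝ):𝕋) ∈ openArcL α :=
      mem_arcL ⟨by linarith, by linarith⟩
    rw [show tldB α true x = tldL α x from rfl, tldL]
    rcases tor with h0 | h0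
    · rw [if_pos (by rw [h0]; exact hmem)]
      rw [h0, hw]
    · have hinR : ((rep x/2:ℝ):𝕋) ∈ openArcR α := by
        rw [h0, show ((a/2+t/2:ℝ):𝕋) + ((1/2:ℝ):𝕋) = ((a/2+t/2+1/2:ℝ):𝕋) from rfl,
          show ((a/2+t/2+1/2:ℝ):𝕋) = ((a/2+1/2+t/2:ℝ):𝕋) from coe_eq_coe.mpr ⟨0, by ring⟩]
        exact mem_arcR ⟨by linarith, by linarith⟩
      rw [if_neg (fun hmem' => arc_disj hmem' hinR)]
      have e2 : ((rep x/2 + 1/2:ℝ):𝕋) = ((rep x/2:ℝ):𝕋) + ((1/2:ℝ):𝕋) := rfl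
      rw [e2, h0, add_assoc,
        show ((1/2:ℝ):𝕋) + ((1/2:ℝ):𝕋) = 0 from by
          rw [show ((1/2:ℝ):𝕋) + ((1/2:ℝ):𝕋) = ((1/2+1/2:ℝ):𝕋) from rfl]
          exact coe_eq_zero.mpr ⟨1, by norm_num⟩,
        add_zero, hw]

lemma ha01 {α : 𝕋} (hα : ¬ Periodic' α) : rep α ∈ Set.Ioo (0:ℝ) 1 := by
  have h := rep_mem α
  rcases eq_or_lt_of_le h.1 with h0 | h0
  · exfalso
    apply hα
    refine ⟨1, le_refl 1, ?_⟩
    have hz : α = ((0:ℝ):𝕋) := by rw [← coe_rep α, ← h0]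
    rw [Function.iterate_one, hz]
    rw [show dbl ((0:ℝ):𝕋) = ((0+0:ℝ):𝕋) from rfl]
    norm_num
  · exact ⟨h0, h.2⟩

lemma main_cor {α : 𝕋} (hα : ¬ Periodic' α) : ∀ g : List Bool,
    wtld α g (star1 α) = ((rep α + Sv α g (sA α):ℝ):𝕋) ∧
    wtld α g (star2 α) = ((rep α + Sv α g (sB α):ℝ):𝕋) ∧
    Sv α g (sA α) ∈ Set.Ioo (0:ℝ) 1 ∧ Sv α g (sB α) ∈ Set.Ioo (0:ℝ) 1 := by
  have ha := ha01 hα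
  obtain ⟨ha0, ha1⟩ := ha
  intro g
  induction g with
  | nil =>
    refine ⟨?_, ?_, ?_, ?_⟩
    · show star1 α = _
      rw [star1, Sv_nil, sA]
      exact coe_eq_coe.mpr ⟨-1, by push_cast; ring⟩
    · show star2 α = _
      rw [star2, Sv_nil, sB]
      congr 1; ring
    · rw [Sv_nil, sA]; exact ⟨by linarith, by linarith⟩
    · rw [Sv_nil, sB]; exact ⟨by linarith, by linarith⟩
  | cons b g IH =>
    obtain ⟨h1, h2, m1, m2⟩ := IH
    have e1 : wtld α (b::g) (star1 α) = ((rep α + phiB α b (Sv α g (sA α)):ℝ):𝕋) := by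
      rw [show wtld α (b::g) (star1 α) = tldB α b (wtld α g (star1 α)) from rfl, h1,
        tld_step b m1]
    have e2 : wtld α (b::g) (star2 α) = ((rep α + phiB α b (Sv α g (sB α)):ℝ):𝕋) := by
      rw [show wtld α (b::g) (star2 α) = tldB α b (wtld α g (star2 α)) from rfl, h2,
        tld_step b m2]
    have n1 : phiB α b (Sv α g (sA α)) ≠ 0 := by
      intro h0
      apply wtld_ne hα (b::g) (dbl_star1 α)
      rw [e1, h0, add_zero, coe_rep]
    have n2 : phiB α b (Sv α g (sB α)) ≠ 0 := by
      intro h0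
      apply wtld_ne hα (b::g) (dbl_star2 α)
      rw [e2, h0, add_zero, coe_rep]
    refine ⟨by rw [e1, Sv_cons], by rw [e2, Sv_cons], ?_, ?_⟩
    · rw [Sv_cons]
      exact ⟨(Int.fract_nonneg _).lt_of_ne (Ne.symm n1), Int.fract_lt_one _⟩
    · rw [Sv_cons]
      exact ⟨(Int.fract_nonneg _).lt_of_ne (Ne.symm n2), Int.fract_lt_one _⟩

lemma sv_ne {α : 𝕋} (hα : ¬ Periodic' α) (g : List Bool) : Sv α g (sA α) ≠ Sv α g (sB α) := by
  intro hEq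
  obtain ⟨h1, h2, _, _⟩ := main_cor hα g
  have hw : wtld α g (star1 α) = wtld α g (star2 α) := by rw [h1, h2, hEq]
  have h3 := congrArg (dbl^[g.length]) hw
  rw [dbl_iter, dbl_iter] at h3
  rw [star1, star2] at h3
  obtain ⟨n, hn⟩ := coe_eq_coe.mp h3
  have h4 : (2*n:ℝ) = -1 := by push_cast; linarith
  have h5 : (2*n:ℤ) = -1 := by exact_mod_cast h4
  omega

lemma rng_false {α : 𝕋} (hα : ¬ Periodic' α) {t : ℝ} (ht : t ∈ Set.Ioo (0:ℝ) 1) :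
    phiB α false t ∈ Set.Ioo (sB α) (sA α) := by
  have ha := ha01 hα
  obtain ⟨ha0, ha1⟩ := ha
  obtain ⟨ht0, ht1⟩ := ht
  rw [phiB, show rhoB α false + t/2 = 1/2 - rep α/2 + t/2 by simp only [rhoB]; norm_num,
    ffe (by linarith) (by linarith), sB, sA]
  exact ⟨by linarith, by linarith⟩

lemma rng_true {α : 𝕋} (hα : ¬ Periodic' α) {t : ℝ} (ht : t ∈ Set.Ioo (0:ℝ) 1)
    (h0 : phiB α true t ≠ 0) :
    phiB α true t ∈ Set.Ioo 0 (sB α) ∪ Set.Ioo (sA α) 1 := by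
  have ha := ha01 hα
  obtain ⟨ha0, ha1⟩ := ha
  obtain ⟨ht0, ht1⟩ := ht
  have harg : rhoB α true + t/2 = t/2 - rep α/2 := by simp only [rhoB]; norm_num; ring
  rcases lt_trichotomy (t/2 - rep α/2) 0 with hc | hc | hc
  · right
    rw [phiB, harg, ffn (by linarith) hc, sA]
    exact ⟨by linarith, by linarith⟩
  · exfalso
    apply h0
    rw [phiB, harg, hc, Int.fract_zero]
  · left
    rw [phiB, harg, ffe hc.le (by linarith), sB]
    exact ⟨hc, by linarith⟩

end StmtEightAux2

noncomputable section StmtEightAux3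

open Set

section Cases

variable {A B : ℝ}

lemma caseL1 (hB : 0 < B) (hBA : A = B + 1/2) (hB2 : B < 1/2) {x y : ℝ}
    (hx : x ∈ Set.Ioo 0 B ∪ Set.Ioo A 1) (hy : y ∈ Set.Ioo 0 B ∪ Set.Ioo A 1) :
    Unl A B x y := by
  have hA1 : A < 1 := by linarith
  have key : ∀ w, w ∈ Set.Ioo 0 B ∪ Set.Ioo A 1 → Cord A w B := by
    rintro w (⟨hw1, hw2⟩ | ⟨hw1, hw2⟩)
    · exact Cof (by linarith) (by linarith) (by linarith) (by linarith) (by linarith)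
        (by linarith) (Or.inr (Or.inl ⟨hw2, by linarith⟩))
    · exact Cof (by linarith) (by linarith) (by linarith) (by linarith) (by linarith)
        (by linarith) (Or.inr (Or.inr ⟨by linarith, hw1⟩))
  exact Or.inl ⟨key x hx, key y hy⟩

lemma caseL2 (hB : 0 < B) (hBA : A = B + 1/2) (hB2 : B < 1/2) {x y : ℝ}
    (hx : x ∈ Set.Ioo B A) (hy : y ∈ Set.Ioo B A) : Unl A B x y := by
  have hA1 : A < 1 := by linarith
  have key : ∀ w, w ∈ Set.Ioo B A → Cord B w A := by
    rintro w ⟨hw1, hw2⟩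
    exact Cof (by linarith) (by linarith) (by linarith) (by linarith) (by linarith)
      (by linarith) (Or.inl ⟨hw1, hw2⟩)
  exact Or.inr ⟨key x hx, key y hy⟩

lemma caseL3' (hB : 0 < B) (hBA : A = B + 1/2) (hB2 : B < 1/2) {v₁ v₂ x y : ℝ}
    (hv : v₁ < v₂)
    (h1 : v₁ ∈ Set.Ioo 0 B ∪ Set.Ioo A 1) (h2 : v₂ ∈ Set.Ioo 0 B ∪ Set.Ioo A 1)
    (hx : x ∈ Set.Ioo B A) (hy : y ∈ Set.Ioo B A) : Unl v₁ v₂ x y := by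
  have hA1 : A < 1 := by linarith
  rcases h1 with ⟨a1, a2⟩ | ⟨a1, a2⟩ <;> rcases h2 with ⟨b1, b2⟩ | ⟨b1, b2⟩
  · -- both in (0,B)
    have key : ∀ w, w ∈ Set.Ioo B A → Cord v₂ w v₁ := by
      rintro w ⟨hw1, hw2⟩
      exact Cof (by linarith) (by linarith) (by linarith) (by linarith) (by linarith)
        (by linarith) (Or.inr (Or.inr ⟨hv, by linarith⟩))
    exact Or.inr ⟨key x hx, key y hy⟩
  · -- v₁ ∈ (0,B), v₂ ∈ (A,1)
    have key : ∀ w, w ∈ Set.Ioo B A → Cord v₁ w v₂ := by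
      rintro w ⟨hw1, hw2⟩
      exact Cof (by linarith) (by linarith) (by linarith) (by linarith) (by linarith)
        (by linarith) (Or.inl ⟨by linarith, by linarith⟩)
    exact Or.inl ⟨key x hx, key y hy⟩
  · exact absurd hv (by linarith)
  · -- both in (A,1)
    have key : ∀ w, w ∈ Set.Ioo B A → Cord v₂ w v₁ := by
      rintro w ⟨hw1, hw2⟩
      exact Cof (by linarith) (by linarith) (by linarith) (by linarith) (by linarith)
        (by linarith) (Or.inr (Or.inl ⟨by linarith, hv⟩))
    exact Or.inr ⟨key x hx, key y hy⟩

lemma caseL3 (hB : 0 < B) (hBA : A = B + 1/2) (hB2 : B < 1/2) {v₁ v₂ x y : ℝ}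
    (hv : v₁ ≠ v₂)
    (h1 : v₁ ∈ Set.Ioo 0 B ∪ Set.Ioo A 1) (h2 : v₂ ∈ Set.Ioo 0 B ∪ Set.Ioo A 1)
    (hx : x ∈ Set.Ioo B A) (hy : y ∈ Set.Ioo B A) : Unl v₁ v₂ x y := by
  rcases hv.lt_or_gt with h | h
  · exact caseL3' hB hBA hB2 h h1 h2 hx hy
  · exact Unl_swap (caseL3' hB hBA hB2 h h2 h1 hx hy)

lemma caseL4' (hB : 0 < B) (hBA : A = B + 1/2) (hB2 : B < 1/2) {v₁ v₂ x y : ℝ}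
    (hv : v₁ < v₂) (h1 : v₁ ∈ Set.Ioo B A) (h2 : v₂ ∈ Set.Ioo B A)
    (hx : x ∈ Set.Ioo 0 B ∪ Set.Ioo A 1) (hy : y ∈ Set.Ioo 0 B ∪ Set.Ioo A 1) :
    Unl v₁ v₂ x y := by
  have hA1 : A < 1 := by linarith
  obtain ⟨a1, a2⟩ := h1
  obtain ⟨b1, b2⟩ := h2
  have key : ∀ w, w ∈ Set.Ioo 0 B ∪ Set.Ioo A 1 → Cord v₂ w v₁ := by
    rintro w (⟨hw1, hw2⟩ | ⟨hw1, hw2⟩)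
    · exact Cof (by linarith) (by linarith) (by linarith) (by linarith) (by linarith)
        (by linarith) (Or.inr (Or.inl ⟨by linarith, hv⟩))
    · exact Cof (by linarith) (by linarith) (by linarith) (by linarith) (by linarith)
        (by linarith) (Or.inr (Or.inr ⟨hv, by linarith⟩))
  exact Or.inr ⟨key x hx, key y hy⟩

lemma caseL4 (hB : 0 < B) (hBA : A = B + 1/2) (hB2 : B < 1/2) {v₁ v₂ x y : ℝ}
    (hv : v₁ ≠ v₂) (h1 : v₁ ∈ Set.Ioo B A) (h2 : v₂ ∈ Set.Ioo B A)
    (hx : x ∈ Set.Ioo 0 B ∪ Set.Ioo A 1) (hy : y ∈ Set.Ioo 0 B ∪ Set.Ioo A 1) :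
    Unl v₁ v₂ x y := by
  rcases hv.lt_or_gt with h | h
  · exact caseL4' hB hBA hB2 h h1 h2 hx hy
  · exact Unl_swap (caseL4' hB hBA hB2 h h2 h1 hx hy)

lemma caseL5' (hB : 0 < B) (hBA : A = B + 1/2) (hB2 : B < 1/2) {v₁ v₂ : ℝ}
    (hv : v₁ < v₂)
    (h1 : v₁ ∈ Set.Ioo 0 B ∪ Set.Ioo A 1) (h2 : v₂ ∈ Set.Ioo 0 B ∪ Set.Ioo A 1) :
    Unl v₁ v₂ A B := by
  have hA1 : A < 1 := by linarith
  rcases h1 with ⟨a1, a2⟩ | ⟨a1, a2⟩ <;> rcases h2 with ⟨b1, b2⟩ | ⟨b1, b2⟩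
  · refine Or.inr ⟨?_, ?_⟩
    · exact Cof (by linarith) (by linarith) (by linarith) (by linarith) (by linarith)
        (by linarith) (Or.inr (Or.inr ⟨hv, by linarith⟩))
    · exact Cof (by linarith) (by linarith) (by linarith) (by linarith) (by linarith)
        (by linarith) (Or.inr (Or.inr ⟨hv, b2⟩))
  · refine Or.inl ⟨?_, ?_⟩
    · exact Cof (by linarith) (by linarith) (by linarith) (by linarith) (by linarith)
        (by linarith) (Or.inl ⟨by linarith, by linarith⟩)
    · exact Cof (by linarith) (by linarith) (by linarith) (by linarith) (by linarith)
        (by linarith) (Or.inl ⟨a2, by linarith⟩)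
  · exact absurd hv (by linarith)
  · refine Or.inr ⟨?_, ?_⟩
    · exact Cof (by linarith) (by linarith) (by linarith) (by linarith) (by linarith)
        (by linarith) (Or.inr (Or.inl ⟨a1, hv⟩))
    · exact Cof (by linarith) (by linarith) (by linarith) (by linarith) (by linarith)
        (by linarith) (Or.inr (Or.inl ⟨by linarith, hv⟩))

lemma caseL5 (hB : 0 < B) (hBA : A = B + 1/2) (hB2 : B < 1/2) {v₁ v₂ : ℝ}
    (hv : v₁ ≠ v₂)
    (h1 : v₁ ∈ Set.Ioo 0 B ∪ Set.Ioo A 1) (h2 : v₂ ∈ Set.Ioo 0 B ∪ Set.Ioo A 1) :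
    Unl v₁ v₂ A B := by
  rcases hv.lt_or_gt with h | h
  · exact caseL5' hB hBA hB2 h h1 h2
  · exact Unl_swap (caseL5' hB hBA hB2 h h2 h1)

lemma caseL6' (hB : 0 < B) (hBA : A = B + 1/2) (hB2 : B < 1/2) {v₁ v₂ : ℝ}
    (hv : v₁ < v₂) (h1 : v₁ ∈ Set.Ioo B A) (h2 : v₂ ∈ Set.Ioo B A) :
    Unl v₁ v₂ A B := by
  have hA1 : A < 1 := by linarith
  obtain ⟨a1, a2⟩ := h1
  obtain ⟨b1, b2⟩ := h2
  refine Or.inr ⟨?_, ?_⟩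
  · exact Cof (by linarith) (by linarith) (by linarith) (by linarith) (by linarith)
      (by linarith) (Or.inr (Or.inr ⟨hv, by linarith⟩))
  · exact Cof (by linarith) (by linarith) (by linarith) (by linarith) (by linarith)
      (by linarith) (Or.inr (Or.inl ⟨by linarith, hv⟩))

lemma caseL6 (hB : 0 < B) (hBA : A = B + 1/2) (hB2 : B < 1/2) {v₁ v₂ : ℝ}
    (hv : v₁ ≠ v₂) (h1 : v₁ ∈ Set.Ioo B A) (h2 : v₂ ∈ Set.Ioo B A) :
    Unl v₁ v₂ A B := by
  rcases hv.lt_or_gt with h | h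
  · exact caseL6' hB hBA hB2 h h1 h2
  · exact Unl_swap (caseL6' hB hBA hB2 h h2 h1)

end Cases

lemma main_unl {α : 𝕋} (hα : ¬ Periodic' α) : ∀ u₁ u₂ : List Bool, u₁ ≠ u₂ →
    Unl (Sv α u₁ (sA α)) (Sv α u₁ (sB α)) (Sv α u₂ (sA α)) (Sv α u₂ (sB α)) := by
  have ha := ha01 hα
  have hB : 0 < sB α := by rw [sB]; linarith [ha.2]
  have hBA : sA α = sB α + 1/2 := by rw [sA, sB]; ring
  have hB2 : sB α < 1/2 := by rw [sB]; linarith [ha.1]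
  have hrngT : ∀ (g : List Bool) (s : ℝ), s = sA α ∨ s = sB α →
      Sv α (true::g) s ∈ Set.Ioo 0 (sB α) ∪ Set.Ioo (sA α) 1 := by
    intro g s hs
    obtain ⟨_, _, m1, m2⟩ := main_cor hα g
    obtain ⟨_, _, k1, k2⟩ := main_cor hα (true::g)
    have hm : Sv α g s ∈ Set.Ioo (0:ℝ) 1 := by rcases hs with rfl | rfl; exacts [m1, m2]
    have hm2 : Sv α (true::g) s ∈ Set.Ioo (0:ℝ) 1 := by
      rcases hs with rfl | rfl; exacts [k1, k2]
    rw [Sv_cons] at hm2 ⊢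
    exact rng_true hα hm (ne_of_gt hm2.1)
  have hrngF : ∀ (g : List Bool) (s : ℝ), s = sA α ∨ s = sB α →
      Sv α (false::g) s ∈ Set.Ioo (sB α) (sA α) := by
    intro g s hs
    obtain ⟨_, _, m1, m2⟩ := main_cor hα g
    have hm : Sv α g s ∈ Set.Ioo (0:ℝ) 1 := by rcases hs with rfl | rfl; exacts [m1, m2]
    rw [Sv_cons]
    exact rng_false hα hm
  intro u₁
  induction u₁ with
  | nil =>
    intro u₂ hne
    cases u₂ with
    | nil => exact absurd rfl hne
    | cons b g =>
      rw [Sv_nil, Sv_nil]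
      cases b
      · exact caseL2 hB hBA hB2 (hrngF g _ (Or.inl rfl)) (hrngF g _ (Or.inr rfl))
      · exact caseL1 hB hBA hB2 (hrngT g _ (Or.inl rfl)) (hrngT g _ (Or.inr rfl))
  | cons b g IH =>
    intro u₂ hne
    cases u₂ with
    | nil =>
      rw [Sv_nil, Sv_nil]
      have hv := sv_ne hα (b::g)
      cases b
      · exact caseL6 hB hBA hB2 hv (hrngF g _ (Or.inl rfl)) (hrngF g _ (Or.inr rfl))
      · exact caseL5 hB hBA hB2 hv (hrngT g _ (Or.inl rfl)) (hrngT g _ (Or.inr rfl))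
    | cons b' g' =>
      by_cases hb : b = b'
      · subst hb
        have hg : g ≠ g' := fun hh => hne (by rw [hh])
        have H := IH g' hg
        obtain ⟨_, _, m1, m2⟩ := main_cor hα g
        obtain ⟨_, _, m3, m4⟩ := main_cor hα g'
        have key : ∀ {p q r : ℝ}, p ∈ Set.Ioo (0:ℝ) 1 → q ∈ Set.Ioo (0:ℝ) 1 →
            r ∈ Set.Ioo (0:ℝ) 1 → Cord p q r →
            Cord (phiB α b p) (phiB α b q) (phiB α b r) := by
          intro p q r hp hq hr hc
          exact Cord_phi (rhoB α b) hp.1.le hp.2 hq.1.le hq.2 hr.1.le hr.2 hc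
        rw [Sv_cons, Sv_cons, Sv_cons, Sv_cons]
        rcases H with ⟨c1, c2⟩ | ⟨c1, c2⟩
        · exact Or.inl ⟨key m1 m3 m2 c1, key m1 m4 m2 c2⟩
        · exact Or.inr ⟨key m2 m3 m1 c1, key m2 m4 m1 c2⟩
      · have hv := sv_ne hα (b::g)
        cases b <;> cases b'
        · exact absurd rfl hb
        · exact caseL4 hB hBA hB2 hv (hrngF g _ (Or.inl rfl)) (hrngF g _ (Or.inr rfl))
            (hrngT g' _ (Or.inl rfl)) (hrngT g' _ (Or.inr rfl))
        · exact caseL3 hB hBA hB2 hv (hrngT g _ (Or.inl rfl)) (hrngT g _ (Or.inr rfl))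
            (hrngF g' _ (Or.inl rfl)) (hrngF g' _ (Or.inr rfl))
        · exact absurd rfl hb
  
end StmtEightAux3

/-- for distinct finite words `u₁ ≠ u₂` over `{L,R}` (coded by `List Bool`),
the chords of `(ũ₁(⋆₁), ũ₁(⋆₂))` and `(ũ₂(⋆₁), ũ₂(⋆₂))` are disjoint. -/
theorem stmt_8 (α : 𝕋) (hα : ¬ Periodic' α) (u₁ u₂ : List Bool) (h : u₁ ≠ u₂) :
    Disjoint (chord (wtld α u₁ (star1 α)) (wtld α u₁ (star2 α)))
      (chord (wtld α u₂ (star1 α)) (wtld α u₂ (star2 α))) := by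
  obtain ⟨c1, c2, _, _⟩ := main_cor hα u₁
  obtain ⟨c3, c4, _, _⟩ := main_cor hα u₂
  rw [chord, chord, c1, c2, c3, c4, emb_coe, emb_coe, emb_coe, emb_coe]
  exact geom (Unl_shift (main_unl hα u₁ u₂ h))
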